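/- Let θ ∈ (0,1), let q ∈ ℝⁿ be a unit vector with all coordinates nonnegative and q_n ≥ q_i for all i, let p > 2, k = p − 2. Consider the population GPM update a⁺ = E_Ω[‖q_Ω‖₂^k · q_Ω] / ‖E_Ω[‖q_Ω‖₂^k · q_Ω]‖₂ where Ω is a θ-Bernoulli random subset of {1,…,n}. Then the n-th coordinate of the unnormalized gradient satisfies E_Ω[‖q_Ω‖₂^k·q_Ω]_i = q_i·(θ²·E_{Ω'}[‖(q_{Ω'}, q_i, q_n)‖₂^k] + θ(1−θ)·E_{Ω'}[‖(q_{Ω'}, q_i)‖₂^k]) for each i ≠ n, where Ω' = Ω∖{i,n} restricted to a θ-Bernoulli subset of {1,…,n}∖{i,n}. -/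

import Mathlib

open Real Finset

/-- Expectation of `f` over a `θ`-Bernoulli random subset of `T`. -/
def EW {n : ℕ} (θ : ℝ) (T : Finset (Fin n)) (f : Finset (Fin n) → ℝ) : ℝ :=
  ∑ S ∈ T.powerset, θ ^ S.card * (1 - θ) ^ (T.card - S.card) * f S

/-- Decomposition of the `i`-th coordinate of the unnormalized population GPM gradient
`E_Ω[‖q_Ω‖₂^k q_Ω]` according to whether the signal index `b` belongs to `Ω`. -/
theorem gpm_gradient_coordinate (n : ℕ) (p θ : ℝ) (hp : 2 < p) (hθ : θ ∈ Set.Ioo (0 : ℝ) 1)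
    (q : Fin n → ℝ) (hq : ∑ j, q j ^ 2 = 1) (hnonneg : ∀ j, 0 ≤ q j)
    (b : Fin n) (hb : ∀ j, q j ≤ q b) (i : Fin n) (hib : i ≠ b) :
    EW θ Finset.univ (fun S =>
        if i ∈ S then (∑ j ∈ S, q j ^ 2) ^ ((p - 2) / 2) * q i else 0) =
      q i * (θ ^ 2 *
          EW θ (Finset.univ \ {i, b})
            (fun S => (∑ j ∈ S, q j ^ 2 + q i ^ 2 + q b ^ 2) ^ ((p - 2) / 2)) +
        θ * (1 - θ) *
          EW θ (Finset.univ \ {i, b})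
            (fun S => (∑ j ∈ S, q j ^ 2 + q i ^ 2) ^ ((p - 2) / 2))) := by
  classical
  set T := (Finset.univ \ {i, b} : Finset (Fin n)) with hT
  have hiT : i ∉ T := by simp [hT]
  have hbT : b ∉ T := by simp [hT]
  have hiT' : i ∉ insert b T := by simp [hib, hiT]
  have huniv : (Finset.univ : Finset (Fin n)) = insert i (insert b T) := by
    ext x
    by_cases hx : x = i <;> by_cases hx' : x = b <;> simp [hT, hx, hx']
  have hN : (Finset.univ : Finset (Fin n)).card = T.card + 2 := by
    rw [huniv, Finset.card_insert_of_notMem hiT', Finset.card_insert_of_notMem hbT]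
  unfold EW
  rw [hN]
  conv_lhs => rw [huniv]
  rw [Finset.sum_powerset_insert hiT']
  beta_reduce
  have hzero : ∑ t ∈ (insert b T).powerset, θ ^ t.card * (1 - θ) ^ (T.card + 2 - t.card) *
      (if i ∈ t then (∑ j ∈ t, q j ^ 2) ^ ((p - 2) / 2) * q i else 0) = 0 := by
    refine Finset.sum_eq_zero fun t ht => ?_
    have hit : i ∉ t := fun h => hiT' (Finset.mem_powerset.mp ht h)
    rw [if_neg hit, mul_zero]
  rw [hzero, zero_add, Finset.sum_powerset_insert hbT]
  beta_reduce
  have key1 : ∑ t ∈ T.powerset, θ ^ (insert i t).card *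
        (1 - θ) ^ (T.card + 2 - (insert i t).card) *
        (if i ∈ insert i t then (∑ j ∈ insert i t, q j ^ 2) ^ ((p - 2) / 2) * q i else 0)
      = q i * (θ * (1 - θ) * ∑ t ∈ T.powerset, θ ^ t.card * (1 - θ) ^ (T.card - t.card) *
          (∑ j ∈ t, q j ^ 2 + q i ^ 2) ^ ((p - 2) / 2)) := by
    rw [Finset.mul_sum, Finset.mul_sum]
    refine Finset.sum_congr rfl fun t ht => ?_
    have htT := Finset.mem_powerset.mp ht
    have hit : i ∉ t := fun h => hiT (htT h)
    have hc : t.card ≤ T.card := Finset.card_le_card htT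
    rw [Finset.card_insert_of_notMem hit, if_pos (Finset.mem_insert_self _ _),
      Finset.sum_insert hit]
    have h1 : T.card + 2 - (t.card + 1) = (T.card - t.card) + 1 := by omega
    have h2 : q i ^ 2 + ∑ j ∈ t, q j ^ 2 = ∑ j ∈ t, q j ^ 2 + q i ^ 2 := by ring
    rw [h1, h2]
    ring
  have key2 : ∑ t ∈ T.powerset, θ ^ (insert i (insert b t)).card *
        (1 - θ) ^ (T.card + 2 - (insert i (insert b t)).card) *
        (if i ∈ insert i (insert b t) then
          (∑ j ∈ insert i (insert b t), q j ^ 2) ^ ((p - 2) / 2) * q i else 0)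
      = q i * (θ ^ 2 * ∑ t ∈ T.powerset, θ ^ t.card * (1 - θ) ^ (T.card - t.card) *
          (∑ j ∈ t, q j ^ 2 + q i ^ 2 + q b ^ 2) ^ ((p - 2) / 2)) := by
    rw [Finset.mul_sum, Finset.mul_sum]
    refine Finset.sum_congr rfl fun t ht => ?_
    have htT := Finset.mem_powerset.mp ht
    have hit : i ∉ t := fun h => hiT (htT h)
    have hbt : b ∉ t := fun h => hbT (htT h)
    have hibt : i ∉ insert b t := by simp [hib, hit]
    have hc : t.card ≤ T.card := Finset.card_le_card htT
    rw [Finset.card_insert_of_notMem hibt, Finset.card_insert_of_notMem hbt,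
      if_pos (Finset.mem_insert_self _ _), Finset.sum_insert hibt, Finset.sum_insert hbt]
    have h1 : T.card + 2 - (t.card + 1 + 1) = T.card - t.card := by omega
    have h2 : q i ^ 2 + (q b ^ 2 + ∑ j ∈ t, q j ^ 2)
        = ∑ j ∈ t, q j ^ 2 + q i ^ 2 + q b ^ 2 := by ring
    rw [h1, h2]
    ring
  rw [key1, key2, ← mul_add, add_comm]
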